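/- Let (X,S) be a minimal subshift and c : A* → ℝ/ℤ a coboundary. Then c extends to a map c : X ∪ A⁺ → ℝ/ℤ satisfying c(x_0) = c(x) − c(Sx) for every x ∈ X (where x_0 is the first letter of x and Sx its shift). -/
import Mathlib


/-- The shift map on one-sided infinite words. -/
def shiftN {A : Type*} (x : ℕ → A) : ℕ → A := fun n => x (n + 1)

/-- The factor of `x` of length `l` starting at position `k`. -/
def factorN {A : Type*} (x : ℕ → A) (k l : ℕ) : List A := (List.range l).map (fun i => x (k + i))

/-- The language of a subshift: the set of finite factors of its elements. -/
def languageN {A : Type*} (X : Set (ℕ → A)) : Set (List A) :=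
  {w | ∃ x ∈ X, ∃ k, w = factorN x k w.length}

/-- `w` is a return word for the language `L`. -/
def IsReturnWord {A : Type*} [DecidableEq A] (L : Set (List A)) (w : List A) : Prop :=
  ∃ (a : A) (u : List A), w = a :: u ∧ w ++ [a] ∈ L ∧ w.count a = 1

section Aux

variable {A : Type*} [DecidableEq A]

/-- Birkhoff-type sum of `c` along the first `p` letters of `y`. -/
noncomputable def cSum (c : A → AddCircle (1 : ℝ)) (y : ℕ → A) (p : ℕ) : AddCircle (1 : ℝ) :=
  ((List.range p).map (fun i => c (y i))).sum

lemma shiftN_iter (x : ℕ → A) (n k : ℕ) : shiftN^[n] x k = x (k + n) := by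
  induction n generalizing x k with
  | zero => rfl
  | succ n ih =>
    rw [Function.iterate_succ_apply, ih]
    simp [shiftN, Nat.add_assoc, Nat.add_comm 1 n]

lemma shiftN_iter_mem (X : Set (ℕ → A)) (hinv : ∀ x ∈ X, shiftN x ∈ X) :
    ∀ (n : ℕ) (x : ℕ → A), x ∈ X → shiftN^[n] x ∈ X := by
  intro n
  induction n with
  | zero => intro x hx; exact hx
  | succ n ih =>
    intro x hx
    rw [Function.iterate_succ_apply']
    exact hinv _ (ih x hx)

lemma cSum_add (c : A → AddCircle (1 : ℝ)) (y : ℕ → A) (a b : ℕ) :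
    cSum c y (a + b) = cSum c y a + cSum c (shiftN^[a] y) b := by
  unfold cSum
  rw [List.range_add, List.map_append, List.sum_append, List.map_map]
  congr 1
  apply congrArg
  apply List.map_congr_left
  intro i _
  simp [Function.comp, shiftN_iter, Nat.add_comm]

lemma cSum_one (c : A → AddCircle (1 : ℝ)) (y : ℕ → A) :
    cSum c y 1 = c (y 0) := by
  have : List.range 1 = [0] := rfl
  simp [cSum, this]

/-- Key lemma: if `y ∈ X` and `y p = y 0`, then the sum of `c` over the first `p`
letters of `y` vanishes, by decomposing into return words. -/
lemma cSum_return_zero (X : Set (ℕ → A)) (hinv : ∀ x ∈ X, shiftN x ∈ X)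
    (c : A → AddCircle (1 : ℝ))
    (hc : ∀ w, IsReturnWord (languageN X) w → (w.map c).sum = 0) :
    ∀ (p : ℕ) (y : ℕ → A), y ∈ X → y p = y 0 → cSum c y p = 0 := by
  intro p
  induction p using Nat.strong_induction_on with
  | _ p ih =>
    intro y hy hp
    rcases Nat.eq_zero_or_pos p with h0 | hpos
    · subst h0; simp [cSum]
    · have hex : ∃ k, 0 < k ∧ k ≤ p ∧ y k = y 0 := ⟨p, hpos, le_refl _, hp⟩
      obtain ⟨k, hk0, hkp, hky, hkmin⟩ :
          ∃ k, 0 < k ∧ k ≤ p ∧ y k = y 0 ∧ ∀ j, 0 < j → j < k → y j ≠ y 0 := by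
        refine ⟨Nat.find hex, (Nat.find_spec hex).1, (Nat.find_spec hex).2.1,
          (Nat.find_spec hex).2.2, ?_⟩
        intro j hj0 hjk hjy
        exact Nat.find_min hex hjk
          ⟨hj0, le_of_lt (lt_of_lt_of_le hjk (Nat.find_spec hex).2.1), hjy⟩
      -- the first k letters form a return word
      have hret : IsReturnWord (languageN X) ((List.range k).map (fun i => y i)) := by
        obtain ⟨k', rfl⟩ : ∃ k', k = k' + 1 := ⟨k - 1, (Nat.succ_pred_eq_of_pos hk0).symm⟩
        refine ⟨y 0, (List.range k').map (fun i => y (i + 1)), ?_, ?_, ?_⟩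
        · rw [List.range_succ_eq_map, List.map_cons, List.map_map]
          rfl
        · refine ⟨y, hy, 0, ?_⟩
          have hlen : (((List.range (k' + 1)).map (fun i => y i)) ++ [y 0]).length
              = k' + 2 := by simp
          rw [hlen]
          have : ([y 0] : List A) = [y (k' + 1)] := by rw [hky]
          rw [this]
          have : ((List.range (k' + 1)).map (fun i => y i)) ++ [y (k' + 1)]
              = (List.range (k' + 2)).map (fun i => y i) := by
            rw [List.range_succ (n := k' + 1), List.map_append]
            rfl
          rw [this]
          unfold factorN
          apply List.map_congr_left
          intro i _
          simp
        · rw [List.range_succ_eq_map, List.map_cons, List.map_map]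
          have h0eq : y 0 :: List.map ((fun i => y i) ∘ Nat.succ) (List.range k')
              = y 0 :: List.map (fun i => y (i + 1)) (List.range k') := rfl
          rw [h0eq, List.count_cons_self]
          have : List.count (y 0) (List.map (fun i => y (i + 1)) (List.range k')) = 0 := by
            rw [List.count_eq_zero]
            intro hmem
            obtain ⟨i, hi, hieq⟩ := List.mem_map.mp hmem
            rw [List.mem_range] at hi
            exact hkmin (i + 1) (Nat.succ_pos i) (by omega) hieq
          rw [this]
      have hw : cSum c y k = 0 := by
        have := hc _ hret
        rw [List.map_map] at this
        exact this
      rcases eq_or_lt_of_le hkp with heq | hlt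
      · rw [heq] at hw; exact hw
      · set z := shiftN^[k] y with hz
        have hzX : z ∈ X := shiftN_iter_mem X hinv k y hy
        have hz0 : z (p - k) = z 0 := by
          rw [hz]
          simp only [shiftN_iter]
          rw [Nat.sub_add_cancel hkp, Nat.zero_add, hp, hky]
        have hzsum : cSum c z (p - k) = 0 := ih (p - k) (by omega) z hzX hz0
        have : cSum c y p = cSum c y (k + (p - k)) := by rw [Nat.add_sub_cancel' hkp]
        rw [this, cSum_add, hw, ← hz, hzsum, add_zero]

/-- If two shifts of the same point coincide, the corresponding sums coincide. -/
lemma cSum_eq_of_iter_eq (X : Set (ℕ → A)) (hinv : ∀ x ∈ X, shiftN x ∈ X)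
    (c : A → AddCircle (1 : ℝ))
    (hc : ∀ w, IsReturnWord (languageN X) w → (w.map c).sum = 0)
    {x : ℕ → A} (hx : x ∈ X) :
    ∀ {n m : ℕ}, shiftN^[n] x = shiftN^[m] x → cSum c x n = cSum c x m := by
  have key : ∀ {n m : ℕ}, n ≤ m → shiftN^[n] x = shiftN^[m] x →
      cSum c x n = cSum c x m := by
    intro n m hnm h
    obtain ⟨d, rfl⟩ : ∃ d, m = n + d := ⟨m - n, (Nat.add_sub_cancel' hnm).symm⟩
    have hyX : shiftN^[n] x ∈ X := shiftN_iter_mem X hinv n x hx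
    have hy0 : (shiftN^[n] x) d = (shiftN^[n] x) 0 := by
      have h0 := congrFun h 0
      simp only [shiftN_iter, Nat.zero_add] at h0
      rw [shiftN_iter, shiftN_iter, Nat.zero_add, Nat.add_comm d n]
      exact h0.symm
    rw [cSum_add, cSum_return_zero X hinv c hc d _ hyX hy0, add_zero]
  intro n m h
  rcases le_total n m with hle | hle
  · exact key hle h
  · exact (key hle h.symm).symm

/-- Well-definedness: the value `cSum x n - cSum r m` does not depend on the
choice of the synchronizing pair `(n, m)`. -/
lemma cSum_wd (X : Set (ℕ → A)) (hinv : ∀ x ∈ X, shiftN x ∈ X)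
    (c : A → AddCircle (1 : ℝ))
    (hc : ∀ w, IsReturnWord (languageN X) w → (w.map c).sum = 0)
    {x r : ℕ → A} (hx : x ∈ X) (hr : r ∈ X) {n m n' m' : ℕ}
    (h1 : shiftN^[n] x = shiftN^[m] r) (h2 : shiftN^[n'] x = shiftN^[m'] r) :
    cSum c x n - cSum c r m = cSum c x n' - cSum c r m' := by
  have e1 : cSum c x (n + n') = cSum c x n + cSum c (shiftN^[m] r) n' := by
    rw [cSum_add, h1]
  have e1r : cSum c r (m + n') = cSum c r m + cSum c (shiftN^[m] r) n' := cSum_add c r m n'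
  have e2 : cSum c x (n' + n) = cSum c x n' + cSum c (shiftN^[m'] r) n := by
    rw [cSum_add, h2]
  have e2r : cSum c r (m' + n) = cSum c r m' + cSum c (shiftN^[m'] r) n := cSum_add c r m' n
  have hiter : shiftN^[m + n'] r = shiftN^[m' + n] r := by
    rw [Nat.add_comm m n', Nat.add_comm m' n, Function.iterate_add_apply,
      Function.iterate_add_apply, ← h1, ← h2,
      ← Function.iterate_add_apply, ← Function.iterate_add_apply, Nat.add_comm n' n]
  have hC : cSum c r (m + n') = cSum c r (m' + n) :=
    cSum_eq_of_iter_eq X hinv c hc hr hiter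
  have e3 : cSum c x (n + n') = cSum c x (n' + n) := by rw [Nat.add_comm]
  calc cSum c x n - cSum c r m
      = (cSum c x n + cSum c (shiftN^[m] r) n')
        - (cSum c r m + cSum c (shiftN^[m] r) n') := by abel
    _ = cSum c x (n + n') - cSum c r (m + n') := by rw [← e1, ← e1r]
    _ = cSum c x (n' + n) - cSum c r (m' + n) := by rw [e3, hC]
    _ = (cSum c x n' + cSum c (shiftN^[m'] r) n)
        - (cSum c r m' + cSum c (shiftN^[m'] r) n) := by rw [e2, e2r]
    _ = cSum c x n' - cSum c r m' := by abel

end Aux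

/-- A coboundary `c : A* → ℝ/ℤ` of a minimal subshift (given by its values on letters,
extended additively to words) extends to a map `F` on `X` satisfying
`c(x₀) = F(x) - F(Sx)` for every `x ∈ X`. -/
theorem coboundary_extends_to_subshift
    {A : Type*} [Fintype A] [DecidableEq A]
    [TopologicalSpace A] [DiscreteTopology A]
    (X : Set (ℕ → A)) (hne : X.Nonempty) (hcl : IsClosed X)
    (hinv : ∀ x ∈ X, shiftN x ∈ X)
    (hmin : ∀ x ∈ X, closure {y | ∃ n : ℕ, y = shiftN^[n] x} = X)
    (c : A → AddCircle (1 : ℝ))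
    (hc : ∀ w, IsReturnWord (languageN X) w → (w.map c).sum = 0) :
    ∃ F : X → AddCircle (1 : ℝ),
      ∀ x : X, c (x.val 0) = F x - F ⟨shiftN x.val, hinv x.val x.2⟩ := by
  classical
  -- the tail-equivalence setoid on X
  let s : Setoid X :=
    ⟨fun x y => ∃ n m, shiftN^[n] x.1 = shiftN^[m] y.1,
      fun x => ⟨0, 0, rfl⟩,
      fun {x y} h => by obtain ⟨n, m, h⟩ := h; exact ⟨m, n, h.symm⟩,
      fun {x y z} h h' => by
        obtain ⟨n, m, h⟩ := h
        obtain ⟨n', m', h'⟩ := h'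
        refine ⟨n' + n, m + m', ?_⟩
        rw [Function.iterate_add_apply, h, ← Function.iterate_add_apply,
          Nat.add_comm n' m, Function.iterate_add_apply, h',
          ← Function.iterate_add_apply]⟩
  have hrel : ∀ x : X, ∃ n m,
      shiftN^[n] x.1 = shiftN^[m] ((Quotient.mk s x).out).1 := by
    intro x
    have h : (Quotient.mk s x).out ≈ x := Quotient.exact (Quotient.out_eq (Quotient.mk s x))
    obtain ⟨n, m, h⟩ := h
    exact ⟨m, n, h.symm⟩
  set G : X → AddCircle (1 : ℝ) := fun x => cSum c x.1 (hrel x).choose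
      - cSum c ((Quotient.mk s x).out).1 (hrel x).choose_spec.choose with hG
  have hGval : ∀ (x : X) (n m : ℕ),
      shiftN^[n] x.1 = shiftN^[m] ((Quotient.mk s x).out).1 →
      G x = cSum c x.1 n - cSum c ((Quotient.mk s x).out).1 m := by
    intro x n m h
    rw [hG]
    exact cSum_wd X hinv c hc x.2 ((Quotient.mk s x).out).2
      (hrel x).choose_spec.choose_spec h
  refine ⟨G, ?_⟩
  intro x
  have hq : Quotient.mk s ⟨shiftN x.1, hinv x.1 x.2⟩ = Quotient.mk s x :=
    Quotient.sound ⟨0, 1, by rw [Function.iterate_one]; rfl⟩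
  have hout : (Quotient.mk s (⟨shiftN x.1, hinv x.1 x.2⟩ : X)).out = (Quotient.mk s x).out := by
    rw [hq]
  obtain ⟨n', m', h2'⟩ := hrel ⟨shiftN x.1, hinv x.1 x.2⟩
  have h2 : shiftN^[n' + 1] x.1 = shiftN^[m'] ((Quotient.mk s x).out).1 := by
    rw [Function.iterate_succ_apply]
    rw [hout] at h2'
    exact h2'
  have hEx : G x = cSum c x.1 (n' + 1) - cSum c ((Quotient.mk s x).out).1 m' :=
    hGval x (n' + 1) m' h2
  have hEx' : G ⟨shiftN x.1, hinv x.1 x.2⟩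
      = cSum c (shiftN x.1) n' - cSum c ((Quotient.mk s (⟨shiftN x.1, hinv x.1 x.2⟩ : X)).out).1 m' :=
    hGval ⟨shiftN x.1, hinv x.1 x.2⟩ n' m' ((hout ▸ h2' : _))
  rw [hout] at hEx'
  have hsplit : cSum c x.1 (n' + 1) = c (x.1 0) + cSum c (shiftN x.1) n' := by
    rw [Nat.add_comm n' 1, cSum_add, cSum_one, Function.iterate_one]
  rw [hEx, hEx', hsplit]
  abel
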